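/- Let g be a Lie algebra acting on the space Z¹(g; N(g)) of 1-cocycles with values in N(g) = Ker(∇: Λ²g → g). Then for any c ∈ Z¹(g; N(g)), Y, Z ∈ g and k ≥ 1, the iterated action satisfies (Y^k c)(Z) = σ(Z)σ(Y)^{k-1}(c(Y)). -/

import Mathlib

open TensorProduct

/-- The diagonal adjoint action `σ(Y)` on `g ⊗ g`, as an endomorphism (so that powers
`σ(Y)^k` make sense). -/
noncomputable def sig2 (g : Type) [LieRing g] [LieAlgebra ℚ g] (Y : g) :
    Module.End ℚ (g ⊗[ℚ] g) :=
  TensorProduct.map (LieAlgebra.ad ℚ g Y) LinearMap.id +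
    TensorProduct.map LinearMap.id (LieAlgebra.ad ℚ g Y)

/-- The bracket map `∇ : g ⊗ g → g`. -/
noncomputable def brm (g : Type) [LieRing g] [LieAlgebra ℚ g] :
    g ⊗[ℚ] g →ₗ[ℚ] g :=
  TensorProduct.lift (LieAlgebra.ad ℚ g : g →ₗ[ℚ] Module.End ℚ g)

/-- The action of `Y ∈ g` on a `1`-cochain `c : g → Λ²g ⊂ g ⊗ g`:
`(Yc)(Z) = σ(Y)(c(Z)) - c([Y,Z])`. -/
noncomputable def actC (g : Type) [LieRing g] [LieAlgebra ℚ g] (Y : g)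
    (c : g →ₗ[ℚ] g ⊗[ℚ] g) : g →ₗ[ℚ] g ⊗[ℚ] g :=
  (sig2 g Y : g ⊗[ℚ] g →ₗ[ℚ] g ⊗[ℚ] g) ∘ₗ c - c ∘ₗ (LieAlgebra.ad ℚ g Y)

lemma sig2_tmul (g : Type) [LieRing g] [LieAlgebra ℚ g] (Y a b : g) :
    sig2 g Y (a ⊗ₜ[ℚ] b) = ⁅Y, a⁆ ⊗ₜ[ℚ] b + a ⊗ₜ[ℚ] ⁅Y, b⁆ := by
  simp [sig2, LieAlgebra.ad_apply]

lemma sig2_comm (g : Type) [LieRing g] [LieAlgebra ℚ g] (Y Z : g) :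
    sig2 g Y * sig2 g Z - sig2 g Z * sig2 g Y = sig2 g ⁅Y, Z⁆ := by
  apply LinearMap.ext
  intro x
  induction x using TensorProduct.induction_on with
  | zero => simp
  | tmul a b =>
      simp only [LinearMap.sub_apply, Module.End.mul_apply, sig2_tmul, map_add,
        lie_lie, TensorProduct.tmul_add, TensorProduct.add_tmul,
        TensorProduct.tmul_sub, TensorProduct.sub_tmul]
      abel
  | add x y hx hy =>
      simp only [map_add, LinearMap.sub_apply, Module.End.mul_apply] at *
      rw [← hx, ← hy]

/-- for a 1-cocycle `c ∈ Z¹(g; N(g))` (values in `N(g) = Ker ∇ ⊂ Λ²g`),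
and any `Y, Z ∈ g`, `k ≥ 1`, the iterated action satisfies
`(Y^k c)(Z) = σ(Z) σ(Y)^{k-1} (c(Y))`. -/
theorem stmt13 (g : Type) [LieRing g] [LieAlgebra ℚ g]
    (c : g →ₗ[ℚ] g ⊗[ℚ] g)
    (hcval₁ : ∀ Z : g, TensorProduct.comm ℚ g g (c Z) = - c Z)
    (hcval₂ : ∀ Z : g, brm g (c Z) = 0)
    (hcocycle : ∀ Y Z : g, c ⁅Y, Z⁆ = sig2 g Y (c Z) - sig2 g Z (c Y)) :
    ∀ (Y Z : g) (k : ℕ), 1 ≤ k →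
      ((actC g Y)^[k] c) Z = sig2 g Z ((sig2 g Y ^ (k - 1)) (c Y)) := by
  intro Y
  suffices h : ∀ k : ℕ, 1 ≤ k → ∀ Z : g,
      ((actC g Y)^[k] c) Z = sig2 g Z ((sig2 g Y ^ (k - 1)) (c Y)) by
    intro Z k hk; exact h k hk Z
  intro k
  induction k with
  | zero => omega
  | succ n ih =>
      intro _ Z
      rcases Nat.eq_zero_or_pos n with hn | hn
      · subst hn
        simp only [Function.iterate_succ_apply', Function.iterate_zero, id_eq,
          Nat.add_sub_cancel, pow_zero]
        simp only [actC, LinearMap.sub_apply, LinearMap.comp_apply, LieAlgebra.ad_apply,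
          Module.End.one_apply]
        rw [hcocycle Y Z]
        abel
      · have key := ih hn
        rw [Function.iterate_succ_apply']
        simp only [actC, LinearMap.sub_apply, LinearMap.comp_apply, LieAlgebra.ad_apply]
        rw [key Z, key ⁅Y, Z⁆]
        have hc := congrFun (congrArg DFunLike.coe (sig2_comm g Y Z))
          ((sig2 g Y ^ (n - 1)) (c Y))
        simp only [LinearMap.sub_apply, Module.End.mul_apply] at hc
        have h2 : sig2 g Y ((sig2 g Z) ((sig2 g Y ^ (n - 1)) (c Y))) -
            sig2 g ⁅Y, Z⁆ ((sig2 g Y ^ (n - 1)) (c Y)) =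
            sig2 g Z (sig2 g Y ((sig2 g Y ^ (n - 1)) (c Y))) := by
          rw [← hc]; abel
        rw [h2]
        congr 1
        have hnn : n + 1 - 1 = (n - 1) + 1 := by omega
        rw [hnn, pow_succ', Module.End.mul_apply]
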